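/- arXiv:1603.05857 — 7 statements merged into one kernel-verified Lean document; each statement's English description precedes it below -/
import Mathlib

section
/- Let G be a group, M a G-module, and α an element of the center of G. Then every element of H^1(G, M) is annihilated by the map M → M sending x to α·x − x; in particular, if this map is an automorphism of M, then H^1(G, M) = 0. -/
/-- Sah's theorem: if α is central in G, then any 1-cocycle Z : G → M becomes a
coboundary after applying x ↦ α•x − x; in particular if that map is bijective,
every 1-cocycle is a coboundary, i.e. H¹(G,M) = 0. -/
theorem sah_theorem {G M : Type*} [Group G] [AddCommGroup M] [DistribMulAction G M]
    (α : G) (hα : α ∈ Subgroup.center G) :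
    (∀ Z : G → M, (∀ σ τ : G, Z (σ * τ) = Z σ + σ • Z τ) →
      ∃ A : M, ∀ σ : G, α • Z σ - Z σ = σ • A - A) ∧
    (Function.Bijective (fun x : M => α • x - x) →
      ∀ Z : G → M, (∀ σ τ : G, Z (σ * τ) = Z σ + σ • Z τ) →
        ∃ A : M, ∀ σ : G, Z σ = σ • A - A) := by
  have comm : ∀ σ : G, σ * α = α * σ := fun σ =>
    (Subgroup.mem_center_iff.mp hα) σ
  have key : ∀ Z : G → M, (∀ σ τ : G, Z (σ * τ) = Z σ + σ • Z τ) →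
      ∀ σ : G, α • Z σ - Z σ = σ • Z α - Z α := by
    intro Z hZ σ
    have h1 := hZ σ α
    have h2 := hZ α σ
    rw [comm σ] at h1
    rw [h2] at h1
    -- h1 : Z α + α • Z σ = Z σ + σ • Z α
    abel_nf
    linear_combination (norm := abel) h1
  refine ⟨fun Z hZ => ⟨Z α, key Z hZ⟩, fun hbij Z hZ => ?_⟩
  obtain ⟨A, hA⟩ := hbij.surjective (Z α)
  refine ⟨A, fun σ => hbij.injective ?_⟩
  show α • _ - _ = α • _ - _
  simp only at hA
  have hc : σ • α • A = α • σ • A := by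
    rw [smul_smul, smul_smul, comm σ]
  calc α • Z σ - Z σ = σ • Z α - Z α := key Z hZ σ
    _ = σ • (α • A - A) - (α • A - A) := by rw [hA]
    _ = α • (σ • A - A) - (σ • A - A) := by
        rw [smul_sub, smul_sub, hc]; abel
end

section
/- Let G be a group acting on an abelian group M and let α be a central element of G such that the map x ↦ α·x − x is bijective on M. Then every cocycle Z : G → M satisfying Z(στ) = Z(σ) + σ·Z(τ) is a coboundary, i.e., there exists A ∈ M with Z(σ) = σ·A − A for all σ ∈ G. -/
/-- Explicit cocycle form of Sah's theorem: if α is central and x ↦ α•x − x is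
bijective on M, then every 1-cocycle Z : G → M is a coboundary. -/
theorem sah_cocycle {G M : Type*} [Group G] [AddCommGroup M] [DistribMulAction G M]
    (α : G) (hα : α ∈ Subgroup.center G)
    (hbij : Function.Bijective (fun x : M => α • x - x))
    (Z : G → M) (hZ : ∀ σ τ : G, Z (σ * τ) = Z σ + σ • Z τ) :
    ∃ A : M, ∀ σ : G, Z σ = σ • A - A := by
  obtain ⟨A, hA⟩ := hbij.2 (Z α)
  simp only at hA
  refine ⟨A, fun σ => hbij.1 ?_⟩
  simp only
  have hcomm : α * σ = σ * α := (Subgroup.mem_center_iff.mp hα σ).symm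
  have h1 : Z α + α • Z σ = Z σ + σ • Z α := by
    rw [← hZ, ← hZ, hcomm]
  have : α • Z σ - Z σ = σ • Z α - Z α := by
    rw [sub_eq_sub_iff_add_eq_add, add_comm (α • Z σ), h1, add_comm]
  rw [this, ← hA, smul_sub, smul_sub, smul_smul, smul_smul, hcomm]
  abel
end

section
/- Let G be a finite group acting on a finite abelian group M, and suppose the p-Sylow subgroup of G is cyclic, generated by σ₀. Then any cocycle Z : G → M with values in the p-primary part of M which satisfies the local conditions (for every σ ∈ G there exists A_σ ∈ M with Z(σ) = σ·A_σ − A_σ) restricts to a coboundary on the p-Sylow subgroup; consequently H^1_loc(G, M) = 0 when M is a p-group. -/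
/-- If the p-Sylow subgroup of a finite group G is cyclic, generated by σ₀, and M
is a finite abelian p-group, then every cocycle Z : G → M satisfying the local
conditions restricts to a coboundary on the p-Sylow subgroup; consequently it is
itself a coboundary, i.e. H¹_loc(G, M) = 0. -/
theorem h1loc_vanishes_of_cyclic_sylow {G M : Type*} [Group G] [Finite G]
    [AddCommGroup M] [Finite M] [DistribMulAction G M]
    (p : ℕ) (hp : p.Prime) (hM : ∃ k : ℕ, Nat.card M = p ^ k)
    (P : Sylow p G) (σ₀ : G) (hcyc : (P : Subgroup G) = Subgroup.zpowers σ₀)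
    (Z : G → M) (hZ : ∀ σ τ : G, Z (σ * τ) = Z σ + σ • Z τ)
    (hloc : ∀ σ : G, ∃ A : M, Z σ = σ • A - A) :
    (∃ A : M, ∀ σ ∈ (P : Subgroup G), Z σ = σ • A - A) ∧
    (∃ A : M, ∀ σ : G, Z σ = σ • A - A) := by
  have hfact : Fact p.Prime := ⟨hp⟩
  have hZ1 : Z 1 = 0 := by
    have h := hZ 1 1
    simp only [mul_one, one_smul] at h
    exact add_eq_left.mp h.symm
  obtain ⟨A, hA⟩ := hloc σ₀
  -- Part 1: coboundary on the Sylow subgroup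
  have hpow : ∀ n : ℕ, Z (σ₀ ^ n) = (σ₀ ^ n) • A - A := by
    intro n
    induction n with
    | zero => simp [hZ1]
    | succ n ih =>
      rw [pow_succ', hZ, hA, ih, smul_sub, ← mul_smul, ← pow_succ']
      abel
  have hP : ∀ σ ∈ (P : Subgroup G), Z σ = σ • A - A := by
    intro σ hσ
    rw [hcyc] at hσ
    obtain ⟨n, rfl⟩ := (isOfFinOrder_of_finite σ₀).mem_powers_iff_mem_zpowers.mpr hσ
    exact hpow n
  refine ⟨⟨A, hP⟩, ?_⟩
  -- Part 2: corestriction argument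
  set W : G → M := fun σ => Z σ - (σ • A - A) with hW
  have hWc : ∀ σ τ : G, W (σ * τ) = W σ + σ • W τ := by
    intro σ τ
    simp only [hW, hZ σ τ, mul_smul, smul_sub]
    abel
  have hWP : ∀ σ ∈ (P : Subgroup G), W σ = 0 := by
    intro σ hσ
    simp [hW, hP σ hσ]
  classical
  have : Fintype (G ⧸ (P : Subgroup G)) := Fintype.ofFinite _
  set B : M := ∑ x : G ⧸ (P : Subgroup G), W (Quotient.out x) with hB
  set m : ℕ := Nat.card (G ⧸ (P : Subgroup G)) with hm
  have key : ∀ σ : G, m • W σ = B - σ • B := by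
    intro σ
    have h1 : ∀ x : G ⧸ (P : Subgroup G),
        W (σ * Quotient.out x) = W (Quotient.out (σ • x)) := by
      intro x
      have hmem : (Quotient.out (σ • x))⁻¹ * (σ * Quotient.out x) ∈ (P : Subgroup G) := by
        rw [← QuotientGroup.eq, QuotientGroup.out_eq', ← smul_eq_mul,
          MulAction.Quotient.mk_smul_out]
      have heq : σ * Quotient.out x =
          Quotient.out (σ • x) * ((Quotient.out (σ • x))⁻¹ * (σ * Quotient.out x)) := by
        group
      rw [heq, hWc, hWP _ hmem, smul_zero, add_zero]
    have h2 : ∑ x : G ⧸ (P : Subgroup G), W (σ * Quotient.out x) = B := by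
      rw [Finset.sum_congr rfl (fun x _ => h1 x), hB]
      exact Fintype.sum_equiv (MulAction.toPerm σ) _ _ (fun x => rfl)
    have h3 : ∑ x : G ⧸ (P : Subgroup G), W (σ * Quotient.out x)
        = m • W σ + σ • B := by
      simp only [hWc]
      rw [Finset.sum_add_distrib, Finset.sum_const, ← Finset.smul_sum, hB, hm,
        Nat.card_eq_fintype_card, Finset.card_univ]
    rw [h3] at h2
    exact eq_sub_of_add_eq h2
  -- m is invertible on M
  obtain ⟨k, hk⟩ := hM
  set n : ℕ := Nat.card M with hn
  have hnpos : 0 < n := Nat.card_pos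
  have hnv : ∀ v : M, n • v = 0 := fun v => card_nsmul_eq_zero'
  have hmod : ∀ (a : ℕ) (v : M), a • v = (a % n) • v := by
    intro a v
    conv_lhs => rw [← Nat.div_add_mod a n]
    rw [add_smul, mul_comm, mul_smul, hnv, smul_zero, zero_add]
  have hpm : ¬ p ∣ m := by
    have := P.not_dvd_index
    rwa [Subgroup.index] at this
  have hcop : Nat.Coprime m n := by
    rw [hk]
    exact (Nat.Coprime.pow_left k ((hp.coprime_iff_not_dvd).mpr hpm)).symm
  set c : ℕ := m ^ (Nat.totient n - 1) with hc
  have hmodeq : c * m ≡ 1 [MOD n] := by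
    have : c * m = m ^ Nat.totient n := by
      rw [hc, ← pow_succ, Nat.sub_add_cancel (Nat.totient_pos.mpr hnpos)]
    rw [this]
    exact Nat.ModEq.pow_totient hcop
  have hcm : ∀ v : M, (c * m) • v = v := by
    intro v
    rw [hmod, hmodeq, ← hmod, one_smul]
  refine ⟨A - c • B, fun σ => ?_⟩
  have hWσ : W σ = c • B - σ • (c • B) := by
    calc W σ = (c * m) • W σ := (hcm _).symm
    _ = c • (m • W σ) := mul_smul c m (W σ)
    _ = c • (B - σ • B) := by rw [key σ]
    _ = c • B - σ • (c • B) := by rw [smul_sub, smul_comm]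
  have hZσ : Z σ = W σ + (σ • A - A) := by simp [hW]
  rw [hZσ, hWσ, smul_sub]
  abel
end

section
/- Let q and n₁, n₂ be positive integers, n = n₁ + n₂, and let G be a group of block-diagonal matrices in GL_n(ℤ/qℤ) of the form diag(B₁, B₂) with B₁ ∈ GL_{n₁}(ℤ/qℤ), B₂ ∈ GL_{n₂}(ℤ/qℤ). Let G₁ and G₂ be the projections of G onto the two blocks. Then H^1_loc(G, (ℤ/qℤ)^n) = 0 if and only if H^1_loc(G₁, (ℤ/qℤ)^{n₁}) = 0 and H^1_loc(G₂, (ℤ/qℤ)^{n₂}) = 0. -/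
open Matrix

/-- H¹_loc(H, (ℤ/qℤ)ⁿ) = 0 for a subgroup H ≤ GL_n(ℤ/qℤ): every 1-cocycle
satisfying the local conditions is a coboundary. -/
def GLH1locTrivial {n q : ℕ} [NeZero q]
    (H : Subgroup (GeneralLinearGroup (Fin n) (ZMod q))) : Prop :=
  ∀ Z : H → (Fin n → ZMod q),
    (∀ σ τ : H, Z (σ * τ) = Z σ +
      ((σ : GeneralLinearGroup (Fin n) (ZMod q)) : Matrix (Fin n) (Fin n) (ZMod q)).mulVec (Z τ)) →
    (∀ σ : H, ∃ A : Fin n → ZMod q,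
      Z σ = ((σ : GeneralLinearGroup (Fin n) (ZMod q)) : Matrix (Fin n) (Fin n) (ZMod q)).mulVec A - A) →
    ∃ A : Fin n → ZMod q, ∀ σ : H,
      Z σ = ((σ : GeneralLinearGroup (Fin n) (ZMod q)) : Matrix (Fin n) (Fin n) (ZMod q)).mulVec A - A

/-- H¹_loc(G, (ℤ/qℤ)^{n₁} × (ℤ/qℤ)^{n₂}) = 0 for a group G of block-diagonal
matrices, realized as a subgroup of GL_{n₁} × GL_{n₂} acting componentwise. -/
def GLH1locTrivialProd {n₁ n₂ q : ℕ} [NeZero q]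
    (G : Subgroup (GeneralLinearGroup (Fin n₁) (ZMod q) × GeneralLinearGroup (Fin n₂) (ZMod q))) :
    Prop :=
  ∀ Z : G → (Fin n₁ → ZMod q) × (Fin n₂ → ZMod q),
    (∀ σ τ : G, Z (σ * τ) = Z σ +
      ((σ.val.1 : Matrix (Fin n₁) (Fin n₁) (ZMod q)).mulVec (Z τ).1,
       (σ.val.2 : Matrix (Fin n₂) (Fin n₂) (ZMod q)).mulVec (Z τ).2)) →
    (∀ σ : G, ∃ A : (Fin n₁ → ZMod q) × (Fin n₂ → ZMod q),
      Z σ = ((σ.val.1 : Matrix (Fin n₁) (Fin n₁) (ZMod q)).mulVec A.1 - A.1,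
             (σ.val.2 : Matrix (Fin n₂) (Fin n₂) (ZMod q)).mulVec A.2 - A.2)) →
    ∃ A : (Fin n₁ → ZMod q) × (Fin n₂ → ZMod q), ∀ σ : G,
      Z σ = ((σ.val.1 : Matrix (Fin n₁) (Fin n₁) (ZMod q)).mulVec A.1 - A.1,
             (σ.val.2 : Matrix (Fin n₂) (Fin n₂) (ZMod q)).mulVec A.2 - A.2)

/-- For a group G of block-diagonal matrices diag(B₁,B₂) in GL_{n₁+n₂}(ℤ/qℤ),
H¹_loc(G,(ℤ/qℤ)ⁿ) = 0 iff H¹_loc(Gᵢ,(ℤ/qℤ)^{nᵢ}) = 0 for the two block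
projections G₁, G₂ of G. -/
theorem h1loc_block_diagonal (q n₁ n₂ : ℕ) (hq : 0 < q) (h₁ : 0 < n₁) (h₂ : 0 < n₂)
    [NeZero q]
    (G : Subgroup (GeneralLinearGroup (Fin n₁) (ZMod q) × GeneralLinearGroup (Fin n₂) (ZMod q))) :
    GLH1locTrivialProd G ↔
      GLH1locTrivial (G.map (MonoidHom.fst _ _)) ∧ GLH1locTrivial (G.map (MonoidHom.snd _ _)) := by
  classical
  constructor
  · intro hG
    constructor
    · -- first projection
      intro Z₁ hc hl
      have memf : ∀ g : G, g.val.1 ∈ G.map (MonoidHom.fst _ _) :=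
        fun g => Subgroup.mem_map.mpr ⟨g.val, g.prop, rfl⟩
      set Z : G → (Fin n₁ → ZMod q) × (Fin n₂ → ZMod q) :=
        fun g => (Z₁ ⟨g.val.1, memf g⟩, 0) with hZ
      have hc' : ∀ σ τ : G, Z (σ * τ) = Z σ +
          ((σ.val.1 : Matrix (Fin n₁) (Fin n₁) (ZMod q)).mulVec (Z τ).1,
           (σ.val.2 : Matrix (Fin n₂) (Fin n₂) (ZMod q)).mulVec (Z τ).2) := by
        intro σ τ
        have h1 : (⟨(σ * τ).val.1, memf (σ * τ)⟩ : G.map (MonoidHom.fst _ _))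
            = ⟨σ.val.1, memf σ⟩ * ⟨τ.val.1, memf τ⟩ := by
          apply Subtype.ext; rfl
        have h2 := hc ⟨σ.val.1, memf σ⟩ ⟨τ.val.1, memf τ⟩
        apply Prod.ext
        · simpa [hZ, h1] using h2
        · simp [hZ, Matrix.mulVec_zero]
      have hl' : ∀ σ : G, ∃ A : (Fin n₁ → ZMod q) × (Fin n₂ → ZMod q),
          Z σ = ((σ.val.1 : Matrix (Fin n₁) (Fin n₁) (ZMod q)).mulVec A.1 - A.1,
                 (σ.val.2 : Matrix (Fin n₂) (Fin n₂) (ZMod q)).mulVec A.2 - A.2) := by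
        intro σ
        obtain ⟨A₁, hA₁⟩ := hl ⟨σ.val.1, memf σ⟩
        refine ⟨(A₁, 0), ?_⟩
        apply Prod.ext
        · simpa [hZ] using hA₁
        · simp [hZ, Matrix.mulVec_zero]
      obtain ⟨A, hA⟩ := hG Z hc' hl'
      refine ⟨A.1, ?_⟩
      intro s
      obtain ⟨x, hx, hx1⟩ := Subgroup.mem_map.mp s.prop
      have hseq : (⟨(⟨x, hx⟩ : G).val.1, memf ⟨x, hx⟩⟩ :
          G.map (MonoidHom.fst _ _)) = s := Subtype.ext hx1
      have h3 := congrArg Prod.fst (hA ⟨x, hx⟩)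
      simp only [hZ] at h3
      rw [hseq] at h3
      rw [h3]
      have : (s : GeneralLinearGroup (Fin n₁) (ZMod q)) = x.1 := hx1.symm
      rw [this]
    · -- second projection
      intro Z₂ hc hl
      have memf : ∀ g : G, g.val.2 ∈ G.map (MonoidHom.snd _ _) :=
        fun g => Subgroup.mem_map.mpr ⟨g.val, g.prop, rfl⟩
      set Z : G → (Fin n₁ → ZMod q) × (Fin n₂ → ZMod q) :=
        fun g => (0, Z₂ ⟨g.val.2, memf g⟩) with hZ
      have hc' : ∀ σ τ : G, Z (σ * τ) = Z σ +
          ((σ.val.1 : Matrix (Fin n₁) (Fin n₁) (ZMod q)).mulVec (Z τ).1,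
           (σ.val.2 : Matrix (Fin n₂) (Fin n₂) (ZMod q)).mulVec (Z τ).2) := by
        intro σ τ
        have h1 : (⟨(σ * τ).val.2, memf (σ * τ)⟩ : G.map (MonoidHom.snd _ _))
            = ⟨σ.val.2, memf σ⟩ * ⟨τ.val.2, memf τ⟩ := by
          apply Subtype.ext; rfl
        have h2 := hc ⟨σ.val.2, memf σ⟩ ⟨τ.val.2, memf τ⟩
        apply Prod.ext
        · simp [hZ, Matrix.mulVec_zero]
        · simpa [hZ, h1] using h2
      have hl' : ∀ σ : G, ∃ A : (Fin n₁ → ZMod q) × (Fin n₂ → ZMod q),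
          Z σ = ((σ.val.1 : Matrix (Fin n₁) (Fin n₁) (ZMod q)).mulVec A.1 - A.1,
                 (σ.val.2 : Matrix (Fin n₂) (Fin n₂) (ZMod q)).mulVec A.2 - A.2) := by
        intro σ
        obtain ⟨A₂, hA₂⟩ := hl ⟨σ.val.2, memf σ⟩
        refine ⟨(0, A₂), ?_⟩
        apply Prod.ext
        · simp [hZ, Matrix.mulVec_zero]
        · simpa [hZ] using hA₂
      obtain ⟨A, hA⟩ := hG Z hc' hl'
      refine ⟨A.2, ?_⟩
      intro s
      obtain ⟨x, hx, hx1⟩ := Subgroup.mem_map.mp s.prop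
      have hseq : (⟨(⟨x, hx⟩ : G).val.2, memf ⟨x, hx⟩⟩ :
          G.map (MonoidHom.snd _ _)) = s := Subtype.ext hx1
      have h3 := congrArg Prod.snd (hA ⟨x, hx⟩)
      simp only [hZ] at h3
      rw [hseq] at h3
      rw [h3]
      have : (s : GeneralLinearGroup (Fin n₂) (ZMod q)) = x.2 := hx1.symm
      rw [this]
  · rintro ⟨hG₁, hG₂⟩
    intro Z hc hl
    have key1 : ∀ σ τ : G, σ.val.1 = τ.val.1 → (Z σ).1 = (Z τ).1 := by
      intro σ τ h
      set ρ : G := σ * τ⁻¹ with hρ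
      have hρ1 : ρ.val.1 = 1 := by
        simp [hρ, h]
      obtain ⟨A, hA⟩ := hl ρ
      have hZρ : (Z ρ).1 = 0 := by
        have h4 := congrArg Prod.fst hA
        rw [hρ1] at h4
        simpa [Matrix.one_mulVec] using h4
      have hστ : ρ * τ = σ := by
        simp [hρ]
      have h5 := congrArg Prod.fst (hc ρ τ)
      rw [hστ, hρ1] at h5
      simpa [hZρ, Matrix.one_mulVec] using h5
    have key2 : ∀ σ τ : G, σ.val.2 = τ.val.2 → (Z σ).2 = (Z τ).2 := by
      intro σ τ h
      set ρ : G := σ * τ⁻¹ with hρ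
      have hρ2 : ρ.val.2 = 1 := by
        simp [hρ, h]
      obtain ⟨A, hA⟩ := hl ρ
      have hZρ : (Z ρ).2 = 0 := by
        have h4 := congrArg Prod.snd hA
        rw [hρ2] at h4
        simpa [Matrix.one_mulVec] using h4
      have hστ : ρ * τ = σ := by
        simp [hρ]
      have h5 := congrArg Prod.snd (hc ρ τ)
      rw [hστ, hρ2] at h5
      simpa [hZρ, Matrix.one_mulVec] using h5
    have hsur1 : ∀ s : G.map (MonoidHom.fst _ _), ∃ g : G, g.val.1 = s.val := by
      intro s
      obtain ⟨x, hx, hx1⟩ := Subgroup.mem_map.mp s.prop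
      exact ⟨⟨x, hx⟩, hx1⟩
    have hsur2 : ∀ s : G.map (MonoidHom.snd _ _), ∃ g : G, g.val.2 = s.val := by
      intro s
      obtain ⟨x, hx, hx1⟩ := Subgroup.mem_map.mp s.prop
      exact ⟨⟨x, hx⟩, hx1⟩
    choose lift1 hlift1 using hsur1
    choose lift2 hlift2 using hsur2
    set W₁ : (G.map (MonoidHom.fst _ _)) → (Fin n₁ → ZMod q) :=
      fun s => (Z (lift1 s)).1 with hW₁
    set W₂ : (G.map (MonoidHom.snd _ _)) → (Fin n₂ → ZMod q) :=
      fun s => (Z (lift2 s)).2 with hW₂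
    have cocW₁ : ∀ s t : G.map (MonoidHom.fst _ _), W₁ (s * t) = W₁ s +
        ((s : GeneralLinearGroup (Fin n₁) (ZMod q)) :
          Matrix (Fin n₁) (Fin n₁) (ZMod q)).mulVec (W₁ t) := by
      intro s t
      have h1 : (lift1 (s * t)).val.1 = (lift1 s * lift1 t).val.1 := by
        simp [hlift1]
      have h6 := key1 _ _ h1
      rw [hW₁]
      simp only []
      rw [h6, congrArg Prod.fst (hc (lift1 s) (lift1 t)), hlift1 s]
      rfl
    have cocW₂ : ∀ s t : G.map (MonoidHom.snd _ _), W₂ (s * t) = W₂ s +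
        ((s : GeneralLinearGroup (Fin n₂) (ZMod q)) :
          Matrix (Fin n₂) (Fin n₂) (ZMod q)).mulVec (W₂ t) := by
      intro s t
      have h1 : (lift2 (s * t)).val.2 = (lift2 s * lift2 t).val.2 := by
        simp [hlift2]
      have h6 := key2 _ _ h1
      rw [hW₂]
      simp only []
      rw [h6, congrArg Prod.snd (hc (lift2 s) (lift2 t)), hlift2 s]
      rfl
    have locW₁ : ∀ s : G.map (MonoidHom.fst _ _), ∃ A : Fin n₁ → ZMod q, W₁ s =
        ((s : GeneralLinearGroup (Fin n₁) (ZMod q)) :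
          Matrix (Fin n₁) (Fin n₁) (ZMod q)).mulVec A - A := by
      intro s
      obtain ⟨A, hA⟩ := hl (lift1 s)
      refine ⟨A.1, ?_⟩
      have h7 := congrArg Prod.fst hA
      rw [hlift1 s] at h7
      simpa [hW₁] using h7
    have locW₂ : ∀ s : G.map (MonoidHom.snd _ _), ∃ A : Fin n₂ → ZMod q, W₂ s =
        ((s : GeneralLinearGroup (Fin n₂) (ZMod q)) :
          Matrix (Fin n₂) (Fin n₂) (ZMod q)).mulVec A - A := by
      intro s
      obtain ⟨A, hA⟩ := hl (lift2 s)
      refine ⟨A.2, ?_⟩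
      have h7 := congrArg Prod.snd hA
      rw [hlift2 s] at h7
      simpa [hW₂] using h7
    obtain ⟨A₁, hA₁⟩ := hG₁ W₁ cocW₁ locW₁
    obtain ⟨A₂, hA₂⟩ := hG₂ W₂ cocW₂ locW₂
    refine ⟨(A₁, A₂), ?_⟩
    intro σ
    have m1 : σ.val.1 ∈ G.map (MonoidHom.fst _ _) :=
      Subgroup.mem_map.mpr ⟨σ.val, σ.prop, rfl⟩
    have m2 : σ.val.2 ∈ G.map (MonoidHom.snd _ _) :=
      Subgroup.mem_map.mpr ⟨σ.val, σ.prop, rfl⟩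
    have e1 : (Z σ).1 = W₁ ⟨σ.val.1, m1⟩ :=
      key1 σ (lift1 ⟨σ.val.1, m1⟩) (by rw [hlift1])
    have e2 : (Z σ).2 = W₂ ⟨σ.val.2, m2⟩ :=
      key2 σ (lift2 ⟨σ.val.2, m2⟩) (by rw [hlift2])
    apply Prod.ext
    · rw [e1, hA₁ ⟨σ.val.1, m1⟩]
    · rw [e2, hA₂ ⟨σ.val.2, m2⟩]
end

section
/- Let p be a prime and G a finite group acting on a finite abelian p-group M. An element of H^1_loc(G, M) is zero if and only if its restriction to H^1_loc(G_p, M) is zero, where G_p is a p-Sylow subgroup of G. -/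
/-- Sylow restriction lemma: for a finite group G acting on a finite abelian
p-group M and a cocycle Z satisfying the local conditions, the class of Z in
H¹_loc(G,M) is zero iff its restriction to a p-Sylow subgroup G_p is zero in
H¹_loc(G_p,M). -/
theorem h1loc_zero_iff_sylow {G M : Type*} [Group G] [Finite G]
    [AddCommGroup M] [Finite M] [DistribMulAction G M]
    (p : ℕ) (hp : p.Prime) (hM : ∃ k : ℕ, Nat.card M = p ^ k)
    (P : Sylow p G)
    (Z : G → M) (hZ : ∀ σ τ : G, Z (σ * τ) = Z σ + σ • Z τ)
    (hloc : ∀ σ : G, ∃ A : M, Z σ = σ • A - A) :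
    (∃ A : M, ∀ σ : G, Z σ = σ • A - A) ↔
      (∃ A : M, ∀ σ ∈ (P : Subgroup G), Z σ = σ • A - A) := by
  classical
  constructor
  · rintro ⟨A, hA⟩
    exact ⟨A, fun σ _ => hA σ⟩
  rintro ⟨A, hA⟩
  haveI : Fact p.Prime := ⟨hp⟩
  -- trivial case : M is a singleton
  rcases eq_or_lt_of_le (Nat.one_le_iff_ne_zero.mpr (Nat.card_pos (α := M)).ne') with hcard | hcard
  · haveI : Subsingleton M := (Nat.card_eq_one_iff_unique.mp hcard.symm).1
    exact ⟨0, fun σ => Subsingleton.elim _ _⟩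
  -- the shifted cocycle vanishing on P
  set Z' : G → M := fun σ => Z σ - (σ • A - A) with hZ'def
  have hZ'cocycle : ∀ σ τ : G, Z' (σ * τ) = Z' σ + σ • Z' τ := by
    intro σ τ
    simp only [hZ'def, hZ σ τ, mul_smul, smul_sub]
    abel
  have hZ'P : ∀ π ∈ (P : Subgroup G), Z' π = 0 := by
    intro π hπ
    simp [hZ'def, hA π hπ]
  haveI : Fintype (G ⧸ (P : Subgroup G)) := Fintype.ofFinite _
  set n : ℕ := Fintype.card (G ⧸ (P : Subgroup G)) with hn
  set B : M := ∑ q : G ⧸ (P : Subgroup G), Z' (Quotient.out q) with hB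
  have key : ∀ (σ : G) (q : G ⧸ (P : Subgroup G)),
      Z' (σ * Quotient.out q) = Z' (Quotient.out (σ • q)) := by
    intro σ q
    have hmem : (Quotient.out (σ • q))⁻¹ * (σ * Quotient.out q) ∈ (P : Subgroup G) := by
      apply QuotientGroup.eq.mp
      rw [QuotientGroup.out_eq']
      exact (MulAction.Quotient.mk_smul_out (P : Subgroup G) σ q).symm
    have hfac : σ * Quotient.out q =
        Quotient.out (σ • q) * ((Quotient.out (σ • q))⁻¹ * (σ * Quotient.out q)) := by
      group
    rw [hfac, hZ'cocycle, hZ'P _ hmem, smul_zero, add_zero]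
  have hsum : ∀ σ : G, ∑ q : G ⧸ (P : Subgroup G), Z' (σ * Quotient.out q) = B := by
    intro σ
    rw [Finset.sum_congr rfl fun q _ => key σ q]
    exact Fintype.sum_equiv (MulAction.toPerm σ) _ _ fun q => rfl
  have main : ∀ σ : G, n • Z' σ = B - σ • B := by
    intro σ
    have h1 : σ • B = B - n • Z' σ := by
      rw [hB, Finset.smul_sum]
      have h2 : ∀ q : G ⧸ (P : Subgroup G),
          σ • Z' (Quotient.out q) = Z' (σ * Quotient.out q) - Z' σ := by
        intro q
        rw [hZ'cocycle σ (Quotient.out q)]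
        abel
      rw [Finset.sum_congr rfl fun q _ => h2 q, Finset.sum_sub_distrib, hsum σ,
        Finset.sum_const, Finset.card_univ]
    rw [h1]
    abel
  -- invert n modulo the p-power order of M
  have hcop : Nat.Coprime n (Nat.card M) := by
    obtain ⟨k, hk⟩ := hM
    rw [hk]
    apply Nat.Coprime.pow_right
    have hdvd : ¬ p ∣ n := by
      haveI : (P : Subgroup G).FiniteIndex := Subgroup.finiteIndex_of_finite
      have := P.not_dvd_index
      rwa [Subgroup.index_eq_card, Nat.card_eq_fintype_card, ← hn] at this
    exact (Nat.coprime_comm.mp ((hp.coprime_iff_not_dvd).mpr hdvd))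
  obtain ⟨u, -, hu⟩ := Nat.exists_mul_mod_eq_one_of_coprime hcop hcard
  have hone : ∀ x : M, (n * u) • x = x := by
    intro x
    have hcM : (Nat.card M) • x = 0 := card_nsmul_eq_zero'
    calc (n * u) • x = ((n * u) % Nat.card M + Nat.card M * ((n * u) / Nat.card M)) • x := by
          rw [Nat.mod_add_div]
      _ = (n * u % Nat.card M) • x + ((n * u) / Nat.card M) • ((Nat.card M) • x) := by
          rw [add_nsmul, mul_comm (Nat.card M), mul_nsmul, smul_comm]
      _ = x := by rw [hu, hcM, smul_zero, add_zero, one_nsmul]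
  set C : M := -(u • B) with hC
  have hZ'C : ∀ σ : G, Z' σ = σ • C - C := by
    intro σ
    have hcomm : σ • (u • B) = u • (σ • B) :=
      AddMonoidHom.map_nsmul (DistribMulAction.toAddMonoidHom M σ) u B
    have h4 : Z' σ = u • B - u • (σ • B) := by
      calc Z' σ = (n * u) • Z' σ := (hone _).symm
        _ = u • (n • Z' σ) := by rw [mul_nsmul, smul_comm]
        _ = u • (B - σ • B) := by rw [main σ]
        _ = u • B - u • (σ • B) := smul_sub u B (σ • B)
    rw [h4, hC, smul_neg, hcomm]
    abel
  refine ⟨C + A, fun σ => ?_⟩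
  have h := hZ'C σ
  rw [show Z' σ = Z σ - (σ • A - A) from rfl] at h
  have hexp : Z σ = σ • C - C + (σ • A - A) := by
    rw [← h]; abel
  rw [hexp, smul_add]
  abel
end

section
/- Let G₁ and G₂ be groups acting on abelian groups M₁ and M₂ respectively, and let G = G₁ × G₂ act on M₁ ⊕ M₂ componentwise. If H^1_loc(G₁, M₁) = 0 and H^1_loc(G₂, M₂) = 0, then H^1_loc(G, M₁ ⊕ M₂) = 0. -/
/-- If H¹_loc(G₁,M₁) = 0 and H¹_loc(G₂,M₂) = 0, then H¹_loc(G₁ × G₂, M₁ ⊕ M₂) = 0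
for the componentwise action: every cocycle of G₁ × G₂ with values in M₁ × M₂
satisfying the local conditions is a coboundary. -/
theorem h1loc_prod {G₁ G₂ M₁ M₂ : Type*} [Group G₁] [Group G₂]
    [AddCommGroup M₁] [AddCommGroup M₂]
    [DistribMulAction G₁ M₁] [DistribMulAction G₂ M₂]
    (h₁ : ∀ Z₁ : G₁ → M₁, (∀ σ τ : G₁, Z₁ (σ * τ) = Z₁ σ + σ • Z₁ τ) →
      (∀ σ : G₁, ∃ A : M₁, Z₁ σ = σ • A - A) → ∃ A : M₁, ∀ σ : G₁, Z₁ σ = σ • A - A)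
    (h₂ : ∀ Z₂ : G₂ → M₂, (∀ σ τ : G₂, Z₂ (σ * τ) = Z₂ σ + σ • Z₂ τ) →
      (∀ σ : G₂, ∃ A : M₂, Z₂ σ = σ • A - A) → ∃ A : M₂, ∀ σ : G₂, Z₂ σ = σ • A - A)
    (Z : G₁ × G₂ → M₁ × M₂)
    (hZ : ∀ σ τ : G₁ × G₂, Z (σ * τ) = Z σ + (σ.1 • (Z τ).1, σ.2 • (Z τ).2))
    (hloc : ∀ σ : G₁ × G₂, ∃ A : M₁ × M₂, Z σ = (σ.1 • A.1 - A.1, σ.2 • A.2 - A.2)) :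
    ∃ A : M₁ × M₂, ∀ σ : G₁ × G₂, Z σ = (σ.1 • A.1 - A.1, σ.2 • A.2 - A.2) := by
  -- the cross components vanish by the local condition
  have hc1 : ∀ τ : G₂, (Z (1, τ)).1 = 0 := by
    intro τ
    obtain ⟨A, hA⟩ := hloc (1, τ)
    have := congrArg Prod.fst hA
    simpa using this
  have hc2 : ∀ σ : G₁, (Z (σ, 1)).2 = 0 := by
    intro σ
    obtain ⟨A, hA⟩ := hloc (σ, 1)
    have := congrArg Prod.snd hA
    simpa using this
  -- restricted cocycles
  obtain ⟨A₁, hA₁⟩ := h₁ (fun σ => (Z (σ, 1)).1)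
    (by
      intro σ τ
      have := congrArg Prod.fst (hZ (σ, 1) (τ, 1))
      simpa using this)
    (by
      intro σ
      obtain ⟨A, hA⟩ := hloc (σ, 1)
      exact ⟨A.1, by simpa using congrArg Prod.fst hA⟩)
  obtain ⟨A₂, hA₂⟩ := h₂ (fun τ => (Z (1, τ)).2)
    (by
      intro σ τ
      have := congrArg Prod.snd (hZ (1, σ) (1, τ))
      simpa using this)
    (by
      intro τ
      obtain ⟨A, hA⟩ := hloc (1, τ)
      exact ⟨A.2, by simpa using congrArg Prod.snd hA⟩)
  refine ⟨(A₁, A₂), fun σ => ?_⟩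
  have hdec : Z σ = Z (σ.1, 1) + ((σ.1 • (Z (1, σ.2)).1 : M₁), (1 : G₂) • (Z (1, σ.2)).2) := by
    have := hZ (σ.1, 1) (1, σ.2)
    simpa using this
  have h1' : (Z σ).1 = σ.1 • A₁ - A₁ := by
    have := congrArg Prod.fst hdec
    simp only [Prod.fst_add] at this
    rw [this, hc1 σ.2, smul_zero, add_zero, hA₁]
  have h2' : (Z σ).2 = σ.2 • A₂ - A₂ := by
    have := congrArg Prod.snd hdec
    simp only [Prod.snd_add] at this
    rw [this, hc2 σ.1, one_smul, hA₂, zero_add]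
  exact Prod.ext h1' h2'
end

section
/- Let G be a finite group, M a G-module which is a finite p-group, and suppose every p-Sylow subgroup of G is cyclic. Then H^1_loc(G, M) = 0. -/
/-- If G is a finite group all of whose p-Sylow subgroups are cyclic and M is a
finite abelian p-group on which G acts, then H¹_loc(G, M) = 0: every cocycle
satisfying the local conditions is a coboundary. -/
theorem h1loc_vanishes_of_cyclic_sylows {G M : Type*} [Group G] [Finite G]
    [AddCommGroup M] [Finite M] [DistribMulAction G M]
    (p : ℕ) (hp : p.Prime) (hM : ∃ k : ℕ, Nat.card M = p ^ k)
    (hcyc : ∀ P : Sylow p G, IsCyclic P)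
    (Z : G → M) (hZ : ∀ σ τ : G, Z (σ * τ) = Z σ + σ • Z τ)
    (hloc : ∀ σ : G, ∃ A : M, Z σ = σ • A - A) :
    ∃ A : M, ∀ σ : G, Z σ = σ • A - A := by
  classical
  obtain ⟨k, hk⟩ := hM
  have hpfact : Fact p.Prime := ⟨hp⟩
  have hZ1 : Z 1 = 0 := by
    have := hZ 1 1
    simpa using this
  obtain ⟨P⟩ : Nonempty (Sylow p G) := inferInstance
  obtain ⟨g, hg⟩ := hcyc P
  obtain ⟨A, hA⟩ := hloc (g : G)
  set Z' : G → M := fun σ => Z σ - (σ • A - A) with hZ'def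
  have hZ'coc : ∀ σ τ : G, Z' (σ * τ) = Z' σ + σ • Z' τ := by
    intro σ τ
    simp only [hZ'def, hZ σ τ, mul_smul, smul_sub]
    abel
  have hZ'pow : ∀ n : ℕ, Z' ((g : G) ^ n) = 0 := by
    intro n
    induction n with
    | zero => simpa [hZ'def] using hZ1
    | succ n ih =>
      rw [pow_succ, hZ'coc, ih]
      simp [hZ'def, hA]
  have hZ'P : ∀ x : G, x ∈ (P : Subgroup G) → Z' x = 0 := by
    intro x hx
    have hmem : (⟨x, hx⟩ : (P : Subgroup G)) ∈ Subgroup.zpowers g := hg _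
    rw [← mem_powers_iff_mem_zpowers] at hmem
    obtain ⟨n, hn⟩ := hmem
    have hx' : x = (g : G) ^ n := by
      have := congrArg (Subtype.val) hn
      simpa using this.symm
    rw [hx']
    exact hZ'pow n
  -- Averaging over cosets
  have : Fintype G := Fintype.ofFinite G
  set H : Subgroup G := (P : Subgroup G) with hHdef
  set C : M := ∑ q : G ⧸ H, Z' (Quotient.out q) with hCdef
  set m : ℕ := H.index with hmdef
  have key : ∀ σ : G, ∀ q : G ⧸ H, Z' (Quotient.out (σ • q)) = Z' σ + σ • Z' (Quotient.out q) := by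
    intro σ q
    set x : G := Quotient.out q with hxdef
    set y : G := Quotient.out (σ • q) with hydef
    have hq1 : (↑(σ * x) : G ⧸ H) = σ • q := by
      have : (↑x : G ⧸ H) = q := QuotientGroup.out_eq' q
      rw [← this]
      rfl
    have hq2 : (↑y : G ⧸ H) = σ • q := QuotientGroup.out_eq' _
    have hmem : y⁻¹ * (σ * x) ∈ H := by
      rw [← QuotientGroup.eq]
      rw [hq2, hq1]
    have hyx : σ * x = y * (y⁻¹ * (σ * x)) := by group
    have := hZ'coc σ x
    rw [hyx, hZ'coc y _, hZ'P _ hmem] at this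
    simpa using this
  have hsum : ∀ σ : G, m • Z' σ + σ • C = C := by
    intro σ
    have hre : ∑ q : G ⧸ H, Z' (Quotient.out (σ • q)) = C := by
      rw [hCdef]
      exact Fintype.sum_equiv (MulAction.toPerm σ) _ _ (fun q => rfl)
    calc m • Z' σ + σ • C
        = ∑ q : G ⧸ H, (Z' σ + σ • Z' (Quotient.out q)) := by
          rw [Finset.sum_add_distrib, Finset.sum_const, ← Finset.smul_sum]
          simp [hmdef, Subgroup.index_eq_card, Nat.card_eq_fintype_card, hCdef]
      _ = ∑ q : G ⧸ H, Z' (Quotient.out (σ • q)) := by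
          exact (Finset.sum_congr rfl fun q _ => (key σ q).symm)
      _ = C := hre
  -- invertibility of m on M
  have hnd : ¬ p ∣ m := P.not_dvd_index
  have hcop : Nat.Coprime m (Nat.card M) := by
    rw [hk]
    exact (Nat.Coprime.pow_right k ((Nat.Prime.coprime_iff_not_dvd hp).2 hnd).symm)
  set n : ℕ := Nat.card M with hndef
  set u : ℤ := Nat.gcdA m n with hudef
  have hbez : (1 : ℤ) = m * Nat.gcdA m n + n * Nat.gcdB m n := by
    have := Nat.gcd_eq_gcd_ab m n
    rwa [hcop] at this
  have hinv : ∀ x : M, ((m : ℤ) * u) • x = x := by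
    intro x
    have h1 : ((1 : ℤ)) • x = x := one_smul _ _
    have hnx : ((n : ℤ) * Nat.gcdB m n) • x = 0 := by
      rw [mul_comm, mul_smul]
      have : (n : ℤ) • x = 0 := by
        have := card_nsmul_eq_zero' (x := x)
        simpa [hndef, natCast_zsmul] using this
      rw [this, smul_zero]
    calc ((m : ℤ) * u) • x = ((m : ℤ) * Nat.gcdA m n + n * Nat.gcdB m n) • x := by
          rw [add_smul, hnx, add_zero, hudef]
      _ = (1 : ℤ) • x := by rw [← hbez]
      _ = x := h1
  -- conclude
  refine ⟨A + (-u) • C, fun σ => ?_⟩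
  have hm : ((m : ℤ)) • Z' σ = C - σ • C := by
    have := hsum σ
    have h2 : (m : ℤ) • Z' σ = m • Z' σ := natCast_zsmul _ _
    rw [h2]
    linear_combination (norm := abel) this
  have hZ's : Z' σ = σ • ((-u) • C) - (-u) • C := by
    have hc : σ • ((-u) • C) = (-u) • (σ • C) := by
      have := (DistribMulAction.toAddMonoidHom M σ).map_zsmul (-u) C
      simpa using this
    rw [hc, ← smul_sub]
    calc Z' σ = ((m : ℤ) * u) • Z' σ := (hinv _).symm
      _ = u • ((m : ℤ) • Z' σ) := by rw [mul_comm, mul_smul]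
      _ = u • (C - σ • C) := by rw [hm]
      _ = (-u) • (σ • C - C) := by rw [neg_smul, ← smul_neg, neg_sub]
  have : Z σ = Z' σ + (σ • A - A) := by simp [hZ'def]
  rw [this, hZ's, smul_add]
  abel
end
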